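/- Let A be a compact Hausdorff second-countable abelian group with normalized Haar probability measure μ, let n ≥ 1, and let F = (f_v)_{v ∈ K_n} be a system of bounded Borel measurable functions on A. Then for every j ∈ {1,…,n} and every x ∈ A, |[F](x)| ≤ (∏_{v ∈ K_n, v_j = 0} ‖f_v‖_∞) · (∏_{v ∈ K_n, v_j = 1} ‖f_v‖_{U_n}). -/

import Mathlib

open MeasureTheory
open scoped BigOperators

/-- The `⋆` operation: conjugate a complex number iff the natural number parameter is odd. -/
noncomputable def cstar (m : ℕ) (z : ℂ) : ℂ := if Even m then z else (starRingEnd ℂ) z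

/-- The height `h(v)` of a cube vertex `v ∈ {0,1}^k`: the number of `1` coordinates. -/
def ht {k : ℕ} (v : Fin k → Bool) : ℕ := (Finset.univ.filter (fun i => v i = true)).card

/-- The point `x + v₁t₁ + ⋯ + v_k t_k` of the cube with base `x` and edges `t`. -/
def vertexPoint {A : Type*} [AddCommGroup A] {k : ℕ} (x : A) (t : Fin k → A)
    (v : Fin k → Bool) : A := x + ∑ i, if v i then t i else 0

/-- The Gowers integral
`G_k(f) = ∫_{A^{k+1}} ∏_{v ∈ {0,1}^k} C^{h(v)} f(x + v₁t₁ + ⋯ + v_k t_k) dμ(x)dμ(t₁)⋯dμ(t_k)`,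
so that `‖f‖_{U_k}^{2^k} = G_k(f)`. -/
noncomputable def gowersIntegral {A : Type*} [AddCommGroup A] [MeasurableSpace A]
    (μ : Measure A) (k : ℕ) (f : A → ℂ) : ℂ :=
  ∫ x, ∫ t : Fin k → A, ∏ v : Fin k → Bool, cstar (ht v) (f (vertexPoint x t v))
    ∂(Measure.pi fun _ => μ) ∂μ


/-- The Gowers uniformity norm `‖f‖_{U_k} = G_k(f)^{1/2^k}`. -/
noncomputable def gowersNorm {A : Type*} [AddCommGroup A] [MeasurableSpace A]
    (μ : Measure A) (k : ℕ) (f : A → ℂ) : ℝ :=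
  (gowersIntegral μ k f).re ^ ((1 : ℝ) / 2 ^ k)

/-- The corner convolution `[F]` of a system `F = (f_v)_{v ∈ K_n}` of functions on `A`,
indexed by the nonzero vertices `K_n = {0,1}^n \ {0}`:
`[F](x) = ∫_{A^n} ∏_{v ∈ K_n} C^{h(v)} f_v(x + v₁t₁ + ⋯ + v_n t_n) dμ(t₁)⋯dμ(t_n)`. -/
noncomputable def cornerConv {A : Type*} [AddCommGroup A] [MeasurableSpace A]
    (μ : Measure A) (n : ℕ) (F : (Fin n → Bool) → A → ℂ) (x : A) : ℂ :=
  ∫ t : Fin n → A,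
    ∏ v ∈ Finset.univ.filter (fun v : Fin n → Bool => v ≠ fun _ => false),
      cstar (ht v) (F v (vertexPoint x t v))
    ∂(Measure.pi fun _ => μ)

set_option linter.unusedSectionVars false
set_option linter.unusedVariables false
set_option maxHeartbeats 1000000

section Aux

open Function

variable {A : Type*} [AddCommGroup A] [TopologicalSpace A] [IsTopologicalAddGroup A]
  [CompactSpace A] [T2Space A] [SecondCountableTopology A]
  [MeasurableSpace A] [BorelSpace A]
  (μ : Measure A) [μ.IsAddHaarMeasure] [IsProbabilityMeasure μ]

lemma cstar_succ (m : ℕ) (z : ℂ) : cstar (m+1) z = (starRingEnd ℂ) (cstar m z) := by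
  simp only [cstar, Nat.even_add_one]
  by_cases h : Even m <;> simp [h]

lemma norm_cstar (m : ℕ) (z : ℂ) : ‖cstar m z‖ = ‖z‖ := by
  unfold cstar; split <;> simp

lemma measurable_cstar {β : Type*} [MeasurableSpace β] {f : β → ℂ} (m : ℕ)
    (hf : Measurable f) : Measurable fun y => cstar m (f y) := by
  unfold cstar; split
  · exact hf
  · exact Complex.continuous_conj.measurable.comp hf

lemma integrable_of_bdd {β : Type*} [MeasurableSpace β] {P : Measure β} [IsFiniteMeasure P]
    {f : β → ℂ} (hm : AEStronglyMeasurable f P) {C : ℝ} (h : ∀ y, ‖f y‖ ≤ C) :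
    Integrable f P :=
  (integrable_const C).mono' hm (Filter.Eventually.of_forall h)

lemma norm_prod_le_pow {ι : Type*} {s : Finset ι} {f : ι → ℂ} {C : ℝ}
    (h : ∀ i ∈ s, ‖f i‖ ≤ C) : ‖∏ i ∈ s, f i‖ ≤ C ^ s.card := by
  rw [norm_prod, ← Finset.prod_const]
  exact Finset.prod_le_prod (fun i _ => norm_nonneg _) h

def dotB {A : Type*} [AddCommGroup A] {k : ℕ} (v : Fin k → Bool) (t : Fin k → A) : A :=
  ∑ i, if v i then t i else 0

lemma vertexPoint_def {k : ℕ} (x : A) (t : Fin k → A) (v : Fin k → Bool) :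
    vertexPoint x t v = x + dotB v t := rfl

lemma measurable_dotB {k : ℕ} (v : Fin k → Bool) :
    Measurable fun t : Fin k → A => dotB v t := by
  unfold dotB
  exact Finset.measurable_sum _ (fun i _ => by
    by_cases h : v i <;> simp [h, measurable_pi_apply])

lemma dotB_insertNth {m : ℕ} (j : Fin (m+1)) (v : Fin (m+1) → Bool) (a : A)
    (t' : Fin m → A) :
    dotB v (j.insertNth a t') = (if v j then a else 0) + dotB (v ∘ j.succAbove) t' := by
  unfold dotB
  rw [Fin.sum_univ_succAbove _ j]
  simp [Fin.insertNth_apply_same, Fin.insertNth_apply_succAbove, Function.comp]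

lemma vertexPoint_insertNth {m : ℕ} (j : Fin (m+1)) (v : Fin (m+1) → Bool) (x a : A)
    (t' : Fin m → A) :
    vertexPoint x (j.insertNth a t') v
      = vertexPoint (x + if v j then a else 0) t' (v ∘ j.succAbove) := by
  rw [vertexPoint_def, vertexPoint_def, dotB_insertNth]
  abel

end Aux

set_option linter.unusedSectionVars false
set_option linter.unusedVariables false
set_option maxHeartbeats 1000000

section Split

open Function

variable {A : Type*} [AddCommGroup A] [TopologicalSpace A] [IsTopologicalAddGroup A]
  [CompactSpace A] [T2Space A] [SecondCountableTopology A]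
  [MeasurableSpace A] [BorelSpace A]
  (μ : Measure A) [μ.IsAddHaarMeasure] [IsProbabilityMeasure μ]

/-- The full Gowers inner product of a system of functions. -/
noncomputable def GP (n : ℕ) (G : (Fin n → Bool) → A → ℂ) : ℂ :=
  ∫ x, ∫ t : Fin n → A, ∏ v : Fin n → Bool, cstar (ht v) (G v (vertexPoint x t v))
    ∂(Measure.pi fun _ => μ) ∂μ

noncomputable def Pside {m : ℕ} (j : Fin (m+1)) (G : (Fin (m+1) → Bool) → A → ℂ)
    (x : A) (t' : Fin m → A) : ℂ :=
  ∏ v ∈ Finset.univ.filter (fun v : Fin (m+1) → Bool => v j = false),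
    cstar (ht v) (G v (vertexPoint x t' (v ∘ j.succAbove)))

noncomputable def Rside {m : ℕ} (j : Fin (m+1)) (G : (Fin (m+1) → Bool) → A → ℂ)
    (y : A) (t' : Fin m → A) : ℂ :=
  ∏ v ∈ Finset.univ.filter (fun v : Fin (m+1) → Bool => v j = true),
    cstar (ht v) (G v (vertexPoint y t' (v ∘ j.succAbove)))

lemma prod_insertNth {m : ℕ} (j : Fin (m+1)) (G : (Fin (m+1) → Bool) → A → ℂ)
    (x a : A) (t' : Fin m → A) :
    (∏ v : Fin (m+1) → Bool, cstar (ht v) (G v (vertexPoint x (j.insertNth a t') v)))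
      = Pside j G x t' * Rside j G (x + a) t' := by
  classical
  rw [← Finset.prod_filter_mul_prod_filter_not Finset.univ
    (fun v : Fin (m+1) → Bool => v j = false)]
  congr 1
  · refine Finset.prod_congr rfl (fun v hv => ?_)
    simp only [Finset.mem_filter] at hv
    rw [vertexPoint_insertNth, hv.2, if_neg (by simp), add_zero]
  · rw [show Finset.univ.filter (fun v : Fin (m+1) → Bool => ¬ v j = false)
        = Finset.univ.filter (fun v : Fin (m+1) → Bool => v j = true) from by
      ext v; simp]
    refine Finset.prod_congr rfl (fun v hv => ?_)
    simp only [Finset.mem_filter] at hv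
    rw [vertexPoint_insertNth, hv.2, if_pos rfl]

/-- Splitting a pi-integral at a coordinate. -/
lemma integral_pi_split {m : ℕ} (j : Fin (m+1)) (φ : (Fin (m+1) → A) → ℂ)
    (hφ : Measurable φ) {C : ℝ} (hb : ∀ t, ‖φ t‖ ≤ C) :
    ∫ t, φ t ∂(Measure.pi fun _ : Fin (m+1) => μ)
      = ∫ t', ∫ a, φ (j.insertNth a t') ∂μ ∂(Measure.pi fun _ : Fin m => μ) := by
  have h := (measurePreserving_piFinSuccAbove (fun _ : Fin (m+1) => μ) j).symm
  set e := MeasurableEquiv.piFinSuccAbove (fun _ : Fin (m+1) => A) j with he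
  have h2 : ∫ t, φ t ∂(Measure.pi fun _ : Fin (m+1) => μ)
      = ∫ p, φ (e.symm p) ∂((μ.prod (Measure.pi fun _ : Fin m => μ))) :=
    (h.integral_comp e.symm.measurableEmbedding φ).symm
  have hint : Integrable (fun p : A × (Fin m → A) => φ (e.symm p))
      (μ.prod (Measure.pi fun _ : Fin m => μ)) :=
    integrable_of_bdd ((hφ.comp e.symm.measurable).aestronglyMeasurable) (fun p => hb _)
  rw [h2, ← integral_integral_swap (by exact hint)]
  rw [integral_integral (by exact hint)]
  simp [he, MeasurableEquiv.piFinSuccAbove_symm_apply, Fin.insertNthEquiv]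

end Split
section Split2

open Function

variable {A : Type*} [AddCommGroup A] [TopologicalSpace A] [IsTopologicalAddGroup A]
  [CompactSpace A] [T2Space A] [SecondCountableTopology A]
  [MeasurableSpace A] [BorelSpace A]
  (μ : Measure A) [μ.IsAddHaarMeasure] [IsProbabilityMeasure μ]

lemma Pside_meas {m : ℕ} (j : Fin (m+1)) {G : (Fin (m+1) → Bool) → A → ℂ}
    (hGm : ∀ v, Measurable (G v)) :
    Measurable (fun p : A × (Fin m → A) => Pside j G p.1 p.2) := by
  refine Finset.measurable_prod _ (fun v _ => ?_)
  refine measurable_cstar _ ((hGm v).comp ?_)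
  exact measurable_fst.add ((measurable_dotB _).comp measurable_snd)

lemma Rside_meas {m : ℕ} (j : Fin (m+1)) {G : (Fin (m+1) → Bool) → A → ℂ}
    (hGm : ∀ v, Measurable (G v)) :
    Measurable (fun p : A × (Fin m → A) => Rside j G p.1 p.2) := by
  refine Finset.measurable_prod _ (fun v _ => ?_)
  refine measurable_cstar _ ((hGm v).comp ?_)
  exact measurable_fst.add ((measurable_dotB _).comp measurable_snd)

lemma norm_Pside_le {m : ℕ} (j : Fin (m+1)) {G : (Fin (m+1) → Bool) → A → ℂ}
    {C : ℝ} (hGb : ∀ v y, ‖G v y‖ ≤ C) (x : A) (t' : Fin m → A) :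
    ‖Pside j G x t'‖ ≤ C ^ (Finset.univ.filter
      (fun v : Fin (m+1) → Bool => v j = false)).card :=
  norm_prod_le_pow (fun v _ => by rw [norm_cstar]; exact hGb v _)

lemma norm_Rside_le {m : ℕ} (j : Fin (m+1)) {G : (Fin (m+1) → Bool) → A → ℂ}
    {C : ℝ} (hGb : ∀ v y, ‖G v y‖ ≤ C) (y : A) (t' : Fin m → A) :
    ‖Rside j G y t'‖ ≤ C ^ (Finset.univ.filter
      (fun v : Fin (m+1) → Bool => v j = true)).card :=
  norm_prod_le_pow (fun v _ => by rw [norm_cstar]; exact hGb v _)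

/-- `R̃`: the inner integral of `Rside` over the base point. -/
noncomputable def Rtil {m : ℕ} (j : Fin (m+1)) (G : (Fin (m+1) → Bool) → A → ℂ)
    (t' : Fin m → A) : ℂ := ∫ y, Rside j G y t' ∂μ

noncomputable def Ptil {m : ℕ} (j : Fin (m+1)) (G : (Fin (m+1) → Bool) → A → ℂ)
    (t' : Fin m → A) : ℂ := ∫ x, Pside j G x t' ∂μ

lemma Rtil_meas {m : ℕ} (j : Fin (m+1)) {G : (Fin (m+1) → Bool) → A → ℂ}
    (hGm : ∀ v, Measurable (G v)) :
    StronglyMeasurable (Rtil μ j G) := by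
  have : StronglyMeasurable (fun p : (Fin m → A) × A => Rside j G p.2 p.1) :=
    ((Rside_meas j hGm).comp measurable_swap).stronglyMeasurable
  exact this.integral_prod_right'

lemma Ptil_meas {m : ℕ} (j : Fin (m+1)) {G : (Fin (m+1) → Bool) → A → ℂ}
    (hGm : ∀ v, Measurable (G v)) :
    StronglyMeasurable (Ptil μ j G) := by
  have : StronglyMeasurable (fun p : (Fin m → A) × A => Pside j G p.2 p.1) :=
    ((Pside_meas j hGm).comp measurable_swap).stronglyMeasurable
  exact this.integral_prod_right'

lemma norm_Rtil_le {m : ℕ} (j : Fin (m+1)) {G : (Fin (m+1) → Bool) → A → ℂ}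
    {C : ℝ} (hGb : ∀ v y, ‖G v y‖ ≤ C) (t' : Fin m → A) :
    ‖Rtil μ j G t'‖ ≤ C ^ (Finset.univ.filter
      (fun v : Fin (m+1) → Bool => v j = true)).card := by
  refine (norm_integral_le_integral_norm _).trans ?_
  calc ∫ y, ‖Rside j G y t'‖ ∂μ ≤ ∫ _, C ^ _ ∂μ := by
        refine integral_mono_of_nonneg (Filter.Eventually.of_forall (fun y => norm_nonneg _))
          (integrable_const _) (Filter.Eventually.of_forall (fun y => norm_Rside_le j hGb y t'))
    _ = _ := by simp
  
lemma norm_Ptil_le {m : ℕ} (j : Fin (m+1)) {G : (Fin (m+1) → Bool) → A → ℂ}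
    {C : ℝ} (hGb : ∀ v y, ‖G v y‖ ≤ C) (t' : Fin m → A) :
    ‖Ptil μ j G t'‖ ≤ C ^ (Finset.univ.filter
      (fun v : Fin (m+1) → Bool => v j = false)).card := by
  refine (norm_integral_le_integral_norm _).trans ?_
  calc ∫ x, ‖Pside j G x t'‖ ∂μ ≤ ∫ _, C ^ _ ∂μ := by
        refine integral_mono_of_nonneg (Filter.Eventually.of_forall (fun y => norm_nonneg _))
          (integrable_const _) (Filter.Eventually.of_forall (fun x => norm_Pside_le j hGb x t'))
    _ = _ := by simp

/-- Key splitting identity for the Gowers inner product. -/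
lemma split_GP {m : ℕ} (j : Fin (m+1)) (G : (Fin (m+1) → Bool) → A → ℂ)
    (hGm : ∀ v, Measurable (G v)) {C : ℝ} (hGb : ∀ v y, ‖G v y‖ ≤ C) :
    GP μ (m+1) G = ∫ t', Ptil μ j G t' * Rtil μ j G t'
      ∂(Measure.pi fun _ : Fin m => μ) := by
  have hmeas : ∀ x : A, Measurable (fun t : Fin (m+1) → A =>
      ∏ v : Fin (m+1) → Bool, cstar (ht v) (G v (vertexPoint x t v))) := by
    intro x
    refine Finset.measurable_prod _ (fun v _ => ?_)
    exact measurable_cstar _ ((hGm v).comp (measurable_const.add (measurable_dotB v)))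
  have hbd : ∀ (x : A) (t : Fin (m+1) → A),
      ‖∏ v : Fin (m+1) → Bool, cstar (ht v) (G v (vertexPoint x t v))‖
        ≤ C ^ (Finset.univ : Finset (Fin (m+1) → Bool)).card :=
    fun x t => norm_prod_le_pow (fun v _ => by rw [norm_cstar]; exact hGb v _)
  have step1 : GP μ (m+1) G = ∫ x, ∫ t', Pside j G x t' * Rtil μ j G t'
      ∂(Measure.pi fun _ : Fin m => μ) ∂μ := by
    unfold GP
    refine integral_congr_ae (Filter.Eventually.of_forall (fun x => ?_))
    dsimp only
    rw [integral_pi_split μ j _ (hmeas x) (hbd x)]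
    refine integral_congr_ae (Filter.Eventually.of_forall (fun t' => ?_))
    have : ∀ a : A, (∏ v : Fin (m+1) → Bool,
        cstar (ht v) (G v (vertexPoint x (j.insertNth a t') v)))
        = Pside j G x t' * Rside j G (x + a) t' := fun a => prod_insertNth j G x a t'
    simp only [this]
    rw [integral_const_mul]
    congr 1
    exact integral_add_left_eq_self (fun y => Rside j G y t') x
  rw [step1]
  have hintswap : Integrable (fun p : A × (Fin m → A) =>
      Pside j G p.1 p.2 * Rtil μ j G p.2)
      (μ.prod (Measure.pi fun _ : Fin m => μ)) := by
    refine integrable_of_bdd ?_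
      (C := (C ^ (Finset.univ.filter (fun v : Fin (m+1) → Bool => v j = false)).card)
        * (C ^ (Finset.univ.filter (fun v : Fin (m+1) → Bool => v j = true)).card))
      (fun p => ?_)
    · exact ((Pside_meas j hGm).aestronglyMeasurable.mul
        ((Rtil_meas μ j hGm).measurable.comp measurable_snd).aestronglyMeasurable)
    · rw [norm_mul]
      exact mul_le_mul (norm_Pside_le j hGb _ _) (norm_Rtil_le μ j hGb _)
        (norm_nonneg _) (le_trans (norm_nonneg _) (norm_Pside_le j hGb p.1 p.2))
  rw [integral_integral_swap (by exact hintswap)]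
  refine integral_congr_ae (Filter.Eventually.of_forall (fun t' => ?_))
  dsimp only
  rw [integral_mul_const]
  rfl

end Split2
section Conj

open Function

variable {A : Type*} [AddCommGroup A] [TopologicalSpace A] [IsTopologicalAddGroup A]
  [CompactSpace A] [T2Space A] [SecondCountableTopology A]
  [MeasurableSpace A] [BorelSpace A]
  (μ : Measure A) [μ.IsAddHaarMeasure] [IsProbabilityMeasure μ]

lemma ht_eq_update_add_one {m : ℕ} (j : Fin (m+1)) (v : Fin (m+1) → Bool)
    (h : v j = true) : ht v = ht (Function.update v j false) + 1 := by
  classical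
  unfold ht
  rw [show Finset.univ.filter (fun i => v i = true)
      = insert j (Finset.univ.filter (fun i => Function.update v j false i = true)) from by
    ext i; by_cases hij : i = j <;> simp [Function.update_apply, hij, h]]
  rw [Finset.card_insert_of_notMem (by simp)]

lemma update_comp_succAbove {m : ℕ} (j : Fin (m+1)) (v : Fin (m+1) → Bool) (b : Bool) :
    (Function.update v j b) ∘ j.succAbove = v ∘ j.succAbove := by
  funext k
  simp [Function.update_apply, (Fin.succAbove_ne j k)]

lemma update_false_of_false {m : ℕ} {j : Fin (m+1)} {v : Fin (m+1) → Bool}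
    (h : v j = false) : Function.update v j false = v := by
  rw [← h, Function.update_eq_self]

lemma update_true_of_true {m : ℕ} {j : Fin (m+1)} {v : Fin (m+1) → Bool}
    (h : v j = true) : Function.update v j true = v := by
  rw [← h, Function.update_eq_self]

lemma prod_filter_update_true {M : Type*} [CommMonoid M] {m : ℕ} (j : Fin (m+1)) (g : (Fin (m+1) → Bool) → M) :
    ∏ w ∈ Finset.univ.filter (fun w : Fin (m+1) → Bool => w j = false), g w
      = ∏ v ∈ Finset.univ.filter (fun v : Fin (m+1) → Bool => v j = true),
          g (Function.update v j false) := by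
  classical
  refine Finset.prod_bij' (fun w _ => Function.update w j true)
    (fun v _ => Function.update v j false) ?_ ?_ ?_ ?_ ?_
  · intro w hw; simp
  · intro v hv; simp
  · intro w hw
    simp only [Finset.mem_filter] at hw
    rw [Function.update_idem, update_false_of_false hw.2]
  · intro v hv
    simp only [Finset.mem_filter] at hv
    rw [Function.update_idem, update_true_of_true hv.2]
  · intro w hw
    simp only [Finset.mem_filter] at hw
    rw [Function.update_idem, update_false_of_false hw.2]

lemma Pside_update_false {m : ℕ} (j : Fin (m+1)) (G : (Fin (m+1) → Bool) → A → ℂ)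
    (x : A) (t' : Fin m → A) :
    Pside j (fun v => G (Function.update v j false)) x t' = Pside j G x t' := by
  unfold Pside
  refine Finset.prod_congr rfl (fun v hv => ?_)
  simp only [Finset.mem_filter] at hv
  dsimp only
  rw [update_false_of_false hv.2]

lemma Rside_update_true {m : ℕ} (j : Fin (m+1)) (G : (Fin (m+1) → Bool) → A → ℂ)
    (y : A) (t' : Fin m → A) :
    Rside j (fun v => G (Function.update v j true)) y t' = Rside j G y t' := by
  unfold Rside
  refine Finset.prod_congr rfl (fun v hv => ?_)
  simp only [Finset.mem_filter] at hv
  dsimp only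
  rw [update_true_of_true hv.2]

lemma Rside_update_false {m : ℕ} (j : Fin (m+1)) (G : (Fin (m+1) → Bool) → A → ℂ)
    (y : A) (t' : Fin m → A) :
    Rside j (fun v => G (Function.update v j false)) y t'
      = (starRingEnd ℂ) (Pside j G y t') := by
  unfold Pside Rside
  rw [map_prod, prod_filter_update_true j
    (fun w => (starRingEnd ℂ) (cstar (ht w) (G w (vertexPoint y t' (w ∘ j.succAbove)))))]
  refine Finset.prod_congr rfl (fun v hv => ?_)
  simp only [Finset.mem_filter] at hv
  dsimp only
  rw [← cstar_succ, ← ht_eq_update_add_one j v hv.2, update_comp_succAbove]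

lemma Pside_update_true {m : ℕ} (j : Fin (m+1)) (G : (Fin (m+1) → Bool) → A → ℂ)
    (x : A) (t' : Fin m → A) :
    Pside j (fun v => G (Function.update v j true)) x t'
      = (starRingEnd ℂ) (Rside j G x t') := by
  unfold Pside Rside
  rw [map_prod, prod_filter_update_true j
    (fun w => cstar (ht w) (G (Function.update w j true) (vertexPoint x t' (w ∘ j.succAbove))))]
  refine Finset.prod_congr rfl (fun v hv => ?_)
  simp only [Finset.mem_filter] at hv
  rw [Function.update_idem, update_true_of_true hv.2, update_comp_succAbove]
  rw [ht_eq_update_add_one j v hv.2, cstar_succ]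
  simp

end Conj
section KeyCS

open Function Complex

variable {A : Type*} [AddCommGroup A] [TopologicalSpace A] [IsTopologicalAddGroup A]
  [CompactSpace A] [T2Space A] [SecondCountableTopology A]
  [MeasurableSpace A] [BorelSpace A]
  (μ : Measure A) [μ.IsAddHaarMeasure] [IsProbabilityMeasure μ]

lemma GP_update_false {m : ℕ} (j : Fin (m+1)) (G : (Fin (m+1) → Bool) → A → ℂ)
    (hGm : ∀ v, Measurable (G v)) {C : ℝ} (hGb : ∀ v y, ‖G v y‖ ≤ C) :
    GP μ (m+1) (fun v => G (Function.update v j false))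
      = ((∫ t', ‖Ptil μ j G t'‖^2 ∂(Measure.pi fun _ : Fin m => μ) : ℝ) : ℂ) := by
  rw [split_GP μ j _ (fun v => hGm _) (fun v y => hGb _ y)]
  have key : ∀ t' : Fin m → A,
      Ptil μ j (fun v => G (Function.update v j false)) t'
        * Rtil μ j (fun v => G (Function.update v j false)) t'
      = ((‖Ptil μ j G t'‖^2 : ℝ) : ℂ) := by
    intro t'
    have hP : Ptil μ j (fun v => G (Function.update v j false)) t' = Ptil μ j G t' := by
      unfold Ptil
      exact integral_congr_ae (Filter.Eventually.of_forall
        (fun x => Pside_update_false j G x t'))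
    have hR : Rtil μ j (fun v => G (Function.update v j false)) t'
        = (starRingEnd ℂ) (Ptil μ j G t') := by
      unfold Rtil Ptil
      simp_rw [Rside_update_false j G]
      exact integral_conj
    rw [hP, hR, Complex.mul_conj, Complex.normSq_eq_norm_sq]
  simp_rw [key]
  exact integral_ofReal

lemma GP_update_true {m : ℕ} (j : Fin (m+1)) (G : (Fin (m+1) → Bool) → A → ℂ)
    (hGm : ∀ v, Measurable (G v)) {C : ℝ} (hGb : ∀ v y, ‖G v y‖ ≤ C) :
    GP μ (m+1) (fun v => G (Function.update v j true))
      = ((∫ t', ‖Rtil μ j G t'‖^2 ∂(Measure.pi fun _ : Fin m => μ) : ℝ) : ℂ) := by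
  rw [split_GP μ j _ (fun v => hGm _) (fun v y => hGb _ y)]
  have key : ∀ t' : Fin m → A,
      Ptil μ j (fun v => G (Function.update v j true)) t'
        * Rtil μ j (fun v => G (Function.update v j true)) t'
      = ((‖Rtil μ j G t'‖^2 : ℝ) : ℂ) := by
    intro t'
    have hP : Ptil μ j (fun v => G (Function.update v j true)) t'
        = (starRingEnd ℂ) (Rtil μ j G t') := by
      unfold Ptil Rtil
      simp_rw [Pside_update_true j G]
      exact integral_conj
    have hR : Rtil μ j (fun v => G (Function.update v j true)) t' = Rtil μ j G t' := by
      unfold Rtil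
      exact integral_congr_ae (Filter.Eventually.of_forall
        (fun y => Rside_update_true j G y t'))
    rw [hP, hR, mul_comm, Complex.mul_conj, Complex.normSq_eq_norm_sq]
  simp_rw [key]
  exact integral_ofReal

lemma sq_rpow_half {a : ℝ} (ha : 0 ≤ a) : (a ^ ((1:ℝ)/2))^2 = a := by
  rw [← Real.rpow_two, ← Real.rpow_mul ha]
  norm_num

/-- Hölder / Cauchy-Schwarz for two bounded measurable complex functions. -/
lemma cs_integral {β : Type*} [MeasurableSpace β] (P : Measure β) [IsProbabilityMeasure P]
    (u w : β → ℂ) (hu : AEStronglyMeasurable u P) (hw : AEStronglyMeasurable w P)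
    {Cu Cw : ℝ} (hub : ∀ y, ‖u y‖ ≤ Cu) (hwb : ∀ y, ‖w y‖ ≤ Cw) :
    ‖∫ y, u y * w y ∂P‖^2 ≤ (∫ y, ‖u y‖^2 ∂P) * (∫ y, ‖w y‖^2 ∂P) := by
  have h2 : Real.HolderConjugate 2 2 := Real.HolderConjugate.two_two
  have hmu : MemLp (fun y => ‖u y‖) (ENNReal.ofReal 2) P :=
    MemLp.of_bound hu.norm Cu (Filter.Eventually.of_forall (fun y => by
      simpa using hub y))
  have hmw : MemLp (fun y => ‖w y‖) (ENNReal.ofReal 2) P :=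
    MemLp.of_bound hw.norm Cw (Filter.Eventually.of_forall (fun y => by
      simpa using hwb y))
  have hold := MeasureTheory.integral_mul_le_Lp_mul_Lq_of_nonneg h2
    (Filter.Eventually.of_forall (fun y => norm_nonneg (u y)))
    (Filter.Eventually.of_forall (fun y => norm_nonneg (w y))) hmu hmw
  have h1 : ‖∫ y, u y * w y ∂P‖ ≤ ∫ y, ‖u y‖ * ‖w y‖ ∂P := by
    refine (norm_integral_le_integral_norm _).trans ?_
    simp [norm_mul, le_refl]
  simp_rw [Real.rpow_two] at hold
  have hsq := pow_le_pow_left₀ (norm_nonneg _) (h1.trans hold) 2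
  rw [mul_pow, sq_rpow_half (integral_nonneg (fun y => sq_nonneg _)),
    sq_rpow_half (integral_nonneg (fun y => sq_nonneg _))] at hsq
  exact hsq

/-- The basic Cauchy–Schwarz step for the Gowers inner product. -/
lemma key_cs {m : ℕ} (j : Fin (m+1)) (G : (Fin (m+1) → Bool) → A → ℂ)
    (hGm : ∀ v, Measurable (G v)) {C : ℝ} (hGb : ∀ v y, ‖G v y‖ ≤ C) :
    ‖GP μ (m+1) G‖^2 ≤ ‖GP μ (m+1) (fun v => G (Function.update v j false))‖
      * ‖GP μ (m+1) (fun v => G (Function.update v j true))‖ := by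
  rw [GP_update_false μ j G hGm hGb, GP_update_true μ j G hGm hGb]
  rw [Complex.norm_real, Complex.norm_real]
  rw [Real.norm_of_nonneg (integral_nonneg (fun t' => sq_nonneg _)),
    Real.norm_of_nonneg (integral_nonneg (fun t' => sq_nonneg _))]
  rw [split_GP μ j G hGm hGb]
  exact cs_integral _ (Ptil μ j G) (Rtil μ j G)
    (Ptil_meas μ j hGm).aestronglyMeasurable (Rtil_meas μ j hGm).aestronglyMeasurable
    (fun t' => norm_Ptil_le μ j hGb t') (fun t' => norm_Rtil_le μ j hGb t')

end KeyCS
section GowersCS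

open Function

variable {A : Type*} [AddCommGroup A] [TopologicalSpace A] [IsTopologicalAddGroup A]
  [CompactSpace A] [T2Space A] [SecondCountableTopology A]
  [MeasurableSpace A] [BorelSpace A]
  (μ : Measure A) [μ.IsAddHaarMeasure] [IsProbabilityMeasure μ]

/-- Vertices supported on a set of coordinates. -/
noncomputable def bf {n : ℕ} (S : Finset (Fin n)) : Finset (Fin n → Bool) := by
  classical exact Finset.univ.filter (fun σ => ∀ i, i ∉ S → σ i = false)

/-- Override the coordinates in `S` by `σ`. -/
def ov {n : ℕ} (S : Finset (Fin n)) (σ v : Fin n → Bool) : Fin n → Bool :=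
  fun i => if i ∈ S then σ i else v i

lemma ov_empty {n : ℕ} (σ v : Fin n → Bool) : ov ∅ σ v = v := by
  funext i; simp [ov]

lemma ov_univ {n : ℕ} (σ v : Fin n → Bool) : ov Finset.univ σ v = σ := by
  funext i; simp [ov]

lemma ov_update {n : ℕ} {S : Finset (Fin n)} {j : Fin n} (hj : j ∉ S)
    (σ v : Fin n → Bool) (b : Bool) :
    ov S σ (Function.update v j b) = ov (insert j S) (Function.update σ j b) v := by
  funext i
  by_cases hij : i = j
  · subst hij
    simp [ov, hj, Function.update_apply]
  · by_cases hiS : i ∈ S <;> simp [ov, hij, hiS, Function.update_apply]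

lemma gowersCS_aux {m : ℕ} (G : (Fin (m+1) → Bool) → A → ℂ)
    (hGm : ∀ v, Measurable (G v)) {C : ℝ} (hGb : ∀ v y, ‖G v y‖ ≤ C)
    (S : Finset (Fin (m+1))) :
    ‖GP μ (m+1) G‖ ^ (2 ^ S.card)
      ≤ ∏ σ ∈ bf S, ‖GP μ (m+1) (fun v => G (ov S σ v))‖ := by
  classical
  induction S using Finset.induction_on with
  | empty =>
    have hbf : bf (∅ : Finset (Fin (m+1))) = {fun _ => false} := by
      ext σ; simp [bf, funext_iff]
    rw [hbf, Finset.prod_singleton]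
    simp only [Finset.card_empty, pow_zero, pow_one]
    refine le_of_eq ?_
    have he : (fun v => G (ov (∅ : Finset (Fin (m+1))) (fun _ => false) v)) = G := by
      funext v; rw [ov_empty]
    rw [he]
  | @insert j' S hj'S ih =>
    rw [Finset.card_insert_of_notMem hj'S]
    have step1 : ‖GP μ (m+1) G‖ ^ 2 ^ (S.card + 1)
        = (‖GP μ (m+1) G‖ ^ 2 ^ S.card) ^ 2 := by
      rw [← pow_mul, pow_succ]
    rw [step1]
    refine le_trans (pow_le_pow_left₀ (pow_nonneg (norm_nonneg _) _) ih 2) ?_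
    rw [← Finset.prod_pow]
    have step2 : ∀ σ ∈ bf S,
        ‖GP μ (m+1) (fun v => G (ov S σ v))‖ ^ 2
          ≤ ‖GP μ (m+1) (fun v => G (ov (insert j' S) (Function.update σ j' false) v))‖
            * ‖GP μ (m+1) (fun v => G (ov (insert j' S) (Function.update σ j' true) v))‖ := by
      intro σ hσ
      have h := key_cs μ j' (fun v => G (ov S σ v))
        (fun v => hGm _) (C := C) (fun v y => hGb _ y)
      simpa only [ov_update hj'S] using h
    refine le_trans (Finset.prod_le_prod (fun σ _ => sq_nonneg _) step2) (le_of_eq ?_)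
    -- reindex : product over bf S of pairs = product over bf (insert j' S)
    have reindex : ∀ g : (Fin (m+1) → Bool) → ℝ,
        ∏ σ' ∈ bf (insert j' S), g σ'
          = ∏ σ ∈ bf S, (g (Function.update σ j' false) * g (Function.update σ j' true)) := by
      intro g
      have h1 : ∏ σ' ∈ bf (insert j' S), g σ'
          = ∏ p ∈ (bf S) ×ˢ (Finset.univ : Finset Bool), g (Function.update p.1 j' p.2) := by
        refine Finset.prod_bij' (fun σ' _ => (Function.update σ' j' false, σ' j'))
          (fun p _ => Function.update p.1 j' p.2) ?_ ?_ ?_ ?_ ?_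
        · intro σ' hσ'
          simp only [bf, Finset.mem_filter, Finset.mem_univ, true_and] at hσ' ⊢
          rw [Finset.mem_product]
          refine ⟨?_, Finset.mem_univ _⟩
          simp only [bf, Finset.mem_filter, Finset.mem_univ, true_and]
          intro i hiS
          by_cases hij : i = j'
          · subst hij; simp
          · rw [Function.update_apply, if_neg hij]
            exact hσ' i (by simp [hij, hiS])
        · intro p hp
          rw [Finset.mem_product] at hp
          have hp1 := hp.1
          simp only [bf, Finset.mem_filter, Finset.mem_univ, true_and] at hp1 ⊢
          intro i hi
          simp only [Finset.mem_insert, not_or] at hi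
          rw [Function.update_apply, if_neg hi.1]
          exact hp1 i hi.2
        · intro σ' hσ'
          dsimp only
          rw [Function.update_idem, Function.update_eq_self]
        · intro p hp
          rw [Finset.mem_product] at hp
          have hp1 := hp.1
          simp only [bf, Finset.mem_filter, Finset.mem_univ, true_and] at hp1
          refine Prod.ext ?_ ?_
          · dsimp only
            rw [Function.update_idem]
            have : p.1 j' = false := hp1 j' hj'S
            rw [← this, Function.update_eq_self]
          · simp
        · intro σ' hσ'
          dsimp only
          rw [Function.update_idem, Function.update_eq_self]
      rw [h1, Finset.prod_product]
      refine Finset.prod_congr rfl (fun σ hσ => ?_)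
      rw [show (Finset.univ : Finset Bool) = {true, false} from rfl]
      rw [Finset.prod_insert (by simp), Finset.prod_singleton]
      exact mul_comm _ _
    rw [reindex (fun σ' => ‖GP μ (m+1) (fun v => G (ov (insert j' S) σ' v))‖)]

end GowersCS
section GowersNormFacts

open Function

variable {A : Type*} [AddCommGroup A] [TopologicalSpace A] [IsTopologicalAddGroup A]
  [CompactSpace A] [T2Space A] [SecondCountableTopology A]
  [MeasurableSpace A] [BorelSpace A]
  (μ : Measure A) [μ.IsAddHaarMeasure] [IsProbabilityMeasure μ]

lemma gowersIntegral_eq_GP {n : ℕ} (f : A → ℂ) :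
    gowersIntegral μ n f = GP μ n (fun _ => f) := rfl

lemma gowersIntegral_ofReal {m : ℕ} (f : A → ℂ) (hfm : Measurable f) {C : ℝ}
    (hfb : ∀ y, ‖f y‖ ≤ C) :
    ∃ r : ℝ, 0 ≤ r ∧ gowersIntegral μ (m+1) f = (r : ℂ) := by
  have h := GP_update_false μ (0 : Fin (m+1)) (fun _ => f) (fun _ => hfm)
    (C := C) (fun _ y => hfb y)
  refine ⟨∫ t', ‖Ptil μ (0 : Fin (m+1)) (fun _ => f) t'‖^2 ∂(Measure.pi fun _ : Fin m => μ),
    integral_nonneg (fun t' => sq_nonneg _), ?_⟩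
  rw [gowersIntegral_eq_GP]
  exact h

lemma gowersNorm_nonneg' {m : ℕ} (f : A → ℂ) (hfm : Measurable f) {C : ℝ}
    (hfb : ∀ y, ‖f y‖ ≤ C) : 0 ≤ gowersNorm μ (m+1) f := by
  obtain ⟨r, hr0, hr⟩ := gowersIntegral_ofReal μ f hfm hfb
  rw [gowersNorm, hr, Complex.ofReal_re]
  exact Real.rpow_nonneg hr0 _

lemma gowersNorm_pow {m : ℕ} (f : A → ℂ) (hfm : Measurable f) {C : ℝ}
    (hfb : ∀ y, ‖f y‖ ≤ C) :
    gowersNorm μ (m+1) f ^ (2 ^ (m+1)) = ‖gowersIntegral μ (m+1) f‖ := by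
  obtain ⟨r, hr0, hr⟩ := gowersIntegral_ofReal μ f hfm hfb
  rw [gowersNorm, hr, Complex.ofReal_re, Complex.norm_real, Real.norm_of_nonneg hr0]
  rw [← Real.rpow_natCast (r ^ ((1:ℝ) / 2 ^ (m+1))) (2 ^ (m+1)), ← Real.rpow_mul hr0]
  rw [show ((1:ℝ) / 2 ^ (m+1)) * ((2 ^ (m+1) : ℕ) : ℝ) = 1 from by
    push_cast
    field_simp]
  exact Real.rpow_one r

/-- The Gowers–Cauchy–Schwarz inequality. -/
lemma gowersCS {m : ℕ} (G : (Fin (m+1) → Bool) → A → ℂ)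
    (hGm : ∀ v, Measurable (G v)) {C : ℝ} (hGb : ∀ v y, ‖G v y‖ ≤ C) :
    ‖GP μ (m+1) G‖ ≤ ∏ σ : Fin (m+1) → Bool, gowersNorm μ (m+1) (G σ) := by
  classical
  have haux := gowersCS_aux μ G hGm hGb Finset.univ
  have hbf : bf (Finset.univ : Finset (Fin (m+1))) = Finset.univ := by
    ext σ; simp [bf]
  rw [hbf] at haux
  have hcard : (Finset.univ : Finset (Fin (m+1))).card = m + 1 := by simp
  rw [hcard] at haux
  have hconst : ∀ σ : Fin (m+1) → Bool,
      ‖GP μ (m+1) (fun v => G (ov Finset.univ σ v))‖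
        = gowersNorm μ (m+1) (G σ) ^ (2 ^ (m+1)) := by
    intro σ
    have : (fun v => G (ov Finset.univ σ v)) = (fun _ => G σ) := by
      funext v; rw [ov_univ]
    rw [this, ← gowersIntegral_eq_GP, ← gowersNorm_pow μ (G σ) (hGm σ) (hGb σ)]
  simp_rw [hconst] at haux
  rw [Finset.prod_pow] at haux
  have hprodnn : 0 ≤ ∏ σ : Fin (m+1) → Bool, gowersNorm μ (m+1) (G σ) :=
    Finset.prod_nonneg (fun σ _ => gowersNorm_nonneg' μ (G σ) (hGm σ) (hGb σ))
  exact le_of_pow_le_pow_left₀ (by positivity) hprodnn haux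

end GowersNormFacts
section MP

open Function
open scoped ENNReal NNReal

variable {A : Type*} [AddCommGroup A] [TopologicalSpace A] [IsTopologicalAddGroup A]
  [CompactSpace A] [T2Space A] [SecondCountableTopology A]
  [MeasurableSpace A] [BorelSpace A]
  (μ : Measure A) [μ.IsAddHaarMeasure] [IsProbabilityMeasure μ]

lemma measurePreserving_shift_add {β : Type*} [MeasurableSpace β] (Q : Measure β)
    [IsProbabilityMeasure Q] (g : β → A) (hg : Measurable g) :
    MeasurePreserving (fun p : A × β => g p.2 + p.1) (μ.prod Q) μ := by
  have hm : Measurable (fun p : A × β => g p.2 + p.1) :=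
    (hg.comp measurable_snd).add measurable_fst
  refine ⟨hm, ?_⟩
  ext s hs
  rw [Measure.map_apply hm hs, Measure.prod_apply_symm (hm hs)]
  have : ∀ b : β, μ ((fun a => (a, b)) ⁻¹' ((fun p : A × β => g p.2 + p.1) ⁻¹' s)) = μ s := by
    intro b
    have : ((fun a => (a, b)) ⁻¹' ((fun p : A × β => g p.2 + p.1) ⁻¹' s))
        = (fun a => g b + a) ⁻¹' s := rfl
    rw [this, measure_preimage_add]
  simp_rw [this]
  simp

lemma measurePreserving_dotB {k : ℕ} (v : Fin k → Bool) (hv : ∃ i, v i = true) (c : A) :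
    MeasurePreserving (fun t : Fin k → A => c + dotB v t)
      (Measure.pi fun _ : Fin k => μ) μ := by
  obtain ⟨i₀, hi₀⟩ := hv
  cases k with
  | zero => exact i₀.elim0
  | succ m =>
    have h1 := measurePreserving_piFinSuccAbove (fun _ : Fin (m+1) => μ) i₀
    have h2 := measurePreserving_shift_add μ (Measure.pi fun _ : Fin m => μ)
      (fun s : Fin m → A => c + dotB (v ∘ i₀.succAbove) s)
      (measurable_const.add (measurable_dotB _))
    have h3 := h2.comp h1
    have heq : (fun t : Fin (m+1) → A => c + dotB v t)
        = (fun p : A × (Fin m → A) => (c + dotB (v ∘ i₀.succAbove) p.2) + p.1)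
          ∘ (MeasurableEquiv.piFinSuccAbove (fun _ : Fin (m+1) => A) i₀) := by
      funext t
      have : dotB v t = t i₀ + dotB (v ∘ i₀.succAbove) (fun k => t (i₀.succAbove k)) := by
        unfold dotB
        rw [Fin.sum_univ_succAbove _ i₀, hi₀]
        simp [Function.comp]
      simp only [Function.comp_apply, MeasurableEquiv.piFinSuccAbove_apply,
        Fin.insertNthEquiv, Equiv.coe_fn_symm_mk]
      rw [this]
      abel
    rw [heq]
    exact h3

lemma ae_comp_of_mp {β : Type*} [MeasurableSpace β] {ν' : Measure β} {T : β → A}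
    (hT : MeasurePreserving T ν' μ) {p : A → Prop} (hp : MeasurableSet {y | p y})
    (h : ∀ᵐ y ∂μ, p y) : ∀ᵐ t ∂ν', p (T t) := by
  rw [← hT.map_eq] at h
  exact (ae_map_iff hT.measurable.aemeasurable hp).mp h

lemma ae_norm_comp_le {k : ℕ} (f : A → ℂ) (hf : Measurable f) {C : ℝ}
    (hfb : ∀ y, ‖f y‖ ≤ C) (v : Fin k → Bool) (hv : ∃ i, v i = true) (c : A) :
    ∀ᵐ t ∂(Measure.pi fun _ : Fin k => μ),
      ‖f (c + dotB v t)‖ ≤ (eLpNorm f ⊤ μ).toReal := by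
  have hfin : eLpNorm f ⊤ μ ≠ ⊤ := by
    rw [eLpNorm_exponent_top]
    exact ne_top_of_le_ne_top ENNReal.ofReal_ne_top
      (eLpNormEssSup_le_of_ae_bound (Filter.Eventually.of_forall hfb))
  have hbase : ∀ᵐ y ∂μ, ‖f y‖ ≤ (eLpNorm f ⊤ μ).toReal := by
    filter_upwards [enorm_ae_le_eLpNormEssSup f μ] with y hy
    rw [eLpNorm_exponent_top]
    calc ‖f y‖ = ((‖f y‖₊ : ℝ≥0∞)).toReal := by simp
      _ ≤ (eLpNormEssSup f μ).toReal := ENNReal.toReal_mono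
          (by rw [← eLpNorm_exponent_top]; exact hfin) hy
  exact ae_comp_of_mp μ (measurePreserving_dotB μ v hv c)
    (measurableSet_le (hf.norm) measurable_const) hbase

end MP

section Final

open Function
open scoped ENNReal NNReal

variable {A : Type*} [AddCommGroup A] [TopologicalSpace A] [IsTopologicalAddGroup A]
  [CompactSpace A] [T2Space A] [SecondCountableTopology A]
  [MeasurableSpace A] [BorelSpace A]
  (μ : Measure A) [μ.IsAddHaarMeasure] [IsProbabilityMeasure μ]

lemma rpow_half_sq {a : ℝ} (ha : 0 ≤ a) : (a^2) ^ ((1:ℝ)/2) = a := by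
  rw [← Real.rpow_two, ← Real.rpow_mul ha]
  norm_num

lemma integral_le_rpow_half {β : Type*} [MeasurableSpace β] (P : Measure β)
    [IsProbabilityMeasure P] (g : β → ℝ) (hg : AEStronglyMeasurable g P)
    (hnn : ∀ y, 0 ≤ g y) {Cg : ℝ} (hb : ∀ y, g y ≤ Cg) :
    ∫ y, g y ∂P ≤ (∫ y, (g y)^2 ∂P) ^ ((1:ℝ)/2) := by
  have hgc : AEStronglyMeasurable (fun y => ((g y : ℝ) : ℂ)) P :=
    Complex.continuous_ofReal.comp_aestronglyMeasurable hg
  have hcs := cs_integral P (fun y => ((g y) : ℂ)) (fun _ => (1:ℂ)) hgc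
    aestronglyMeasurable_const (Cu := Cg) (Cw := 1)
    (fun y => by rw [Complex.norm_real, Real.norm_of_nonneg (hnn y)]; exact hb y)
    (fun _ => by simp)
  have hL : ∫ y, ((g y : ℝ) : ℂ) * 1 ∂P = ((∫ y, g y ∂P : ℝ) : ℂ) := by
    simp only [mul_one]
    exact integral_ofReal
  rw [hL, Complex.norm_real, Real.norm_of_nonneg (integral_nonneg hnn)] at hcs
  have hR1 : (∫ y, ‖((g y : ℝ) : ℂ)‖^2 ∂P) = ∫ y, (g y)^2 ∂P := by
    refine integral_congr_ae (Filter.Eventually.of_forall (fun y => ?_))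
    dsimp only
    rw [Complex.norm_real, Real.norm_of_nonneg (hnn y)]
  have hR2 : (∫ _ : β, ‖(1 : ℂ)‖^2 ∂P) = 1 := by simp
  rw [hR1, hR2, mul_one] at hcs
  have h2 := Real.rpow_le_rpow (sq_nonneg _) hcs (by norm_num : (0:ℝ) ≤ 1/2)
  rwa [rpow_half_sq (integral_nonneg hnn)] at h2

end Final


/-- for every `j` and every `x`, the corner convolution satisfies
`|[F](x)| ≤ ∏_{v ∈ K_n, v_j = 0} ‖f_v‖_∞ · ∏_{v ∈ K_n, v_j = 1} ‖f_v‖_{U_n}`. -/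
theorem abs_cornerConv_le
    {A : Type*} [AddCommGroup A] [TopologicalSpace A] [IsTopologicalAddGroup A]
    [CompactSpace A] [T2Space A] [SecondCountableTopology A]
    [MeasurableSpace A] [BorelSpace A]
    (μ : Measure A) [μ.IsAddHaarMeasure] [IsProbabilityMeasure μ]
    (n : ℕ) (hn : 1 ≤ n)
    (F : (Fin n → Bool) → A → ℂ)
    (hmeas : ∀ v, Measurable (F v)) (hbd : ∀ v, ∃ C : ℝ, ∀ x, ‖F v x‖ ≤ C)
    (j : Fin n) (x : A) :
    ‖cornerConv μ n F x‖ ≤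
      (∏ v ∈ Finset.univ.filter
          (fun v : Fin n → Bool => (v ≠ fun _ => false) ∧ v j = false),
        (eLpNorm (F v) ⊤ μ).toReal) *
      ∏ v ∈ Finset.univ.filter (fun v : Fin n → Bool => v j = true),
        gowersNorm μ n (F v) := by
  classical
  open Function in
  obtain ⟨m, rfl⟩ : ∃ m, n = m + 1 := ⟨n - 1, (Nat.succ_pred_eq_of_pos hn).symm⟩
  obtain ⟨C, hC⟩ : ∃ C : ℝ, ∀ v y, ‖F v y‖ ≤ C := by
    choose c hc using hbd
    refine ⟨∑ v, |c v|, fun v y => (hc v y).trans ?_⟩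
    calc c v ≤ |c v| := le_abs_self _
      _ ≤ ∑ v, |c v| := Finset.single_le_sum (f := fun v => |c v|)
          (fun v _ => abs_nonneg _) (Finset.mem_univ v)
  have hC0 : 0 ≤ C := le_trans (norm_nonneg _) (hC (fun _ => false) 0)
  set ν' := (Measure.pi fun _ : Fin m => μ) with hν'
  set K0 := Finset.univ.filter
      (fun v : Fin (m+1) → Bool => (v ≠ fun _ => false) ∧ v j = false) with hK0
  set K1 := Finset.univ.filter (fun v : Fin (m+1) → Bool => v j = true) with hK1
  set PK : (Fin m → A) → ℂ := fun t' =>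
    ∏ v ∈ K0, cstar (ht v) (F v (vertexPoint x t' (v ∘ j.succAbove))) with hPK
  have hPKmeas : Measurable PK := by
    refine Finset.measurable_prod _ (fun v _ => ?_)
    exact measurable_cstar _ ((hmeas v).comp (measurable_const.add (measurable_dotB _)))
  have hPKbd : ∀ t', ‖PK t'‖ ≤ C ^ K0.card := fun t' =>
    norm_prod_le_pow (fun v _ => by rw [norm_cstar]; exact hC v _)
  have hRtilmeas : StronglyMeasurable (Rtil μ j F) := Rtil_meas μ j hmeas
  have hRtilbd := norm_Rtil_le μ j (G := F) (C := C) hC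
  -- Step 1 : splitting of the corner convolution
  have hsplit : cornerConv μ (m+1) F x = ∫ t', PK t' * Rtil μ j F t' ∂ν' := by
    unfold cornerConv
    rw [integral_pi_split μ j
      (fun t => ∏ v ∈ Finset.univ.filter (fun v : Fin (m+1) → Bool => v ≠ fun _ => false),
        cstar (ht v) (F v (vertexPoint x t v)))
      (Finset.measurable_prod _ (fun v _ =>
        measurable_cstar _ ((hmeas v).comp
          (show Measurable fun t : Fin (m+1) → A => vertexPoint x t v from
            measurable_const.add (measurable_dotB v)))))
      (C := C ^ (Finset.univ.filter
        (fun v : Fin (m+1) → Bool => v ≠ fun _ => false)).card)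
      (fun t => norm_prod_le_pow (fun v _ => by rw [norm_cstar]; exact hC v _))]
    refine integral_congr_ae (Filter.Eventually.of_forall (fun t' => ?_))
    have hsplitprod : ∀ a : A,
        (∏ v ∈ Finset.univ.filter (fun v : Fin (m+1) → Bool => v ≠ fun _ => false),
          cstar (ht v) (F v (vertexPoint x (j.insertNth a t') v)))
        = PK t' * Rside j F (x + a) t' := by
      intro a
      rw [← Finset.prod_filter_mul_prod_filter_not
        (Finset.univ.filter (fun v : Fin (m+1) → Bool => v ≠ fun _ => false))
        (fun v => v j = false)]
      congr 1
      · rw [Finset.filter_filter]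
        refine Finset.prod_congr rfl (fun v hv => ?_)
        simp only [hK0, Finset.mem_filter] at hv
        rw [vertexPoint_insertNth, hv.2.2, if_neg (by simp), add_zero]
      · rw [Finset.filter_filter]
        rw [show Finset.univ.filter
              (fun v : Fin (m+1) → Bool => (v ≠ fun _ => false) ∧ ¬ v j = false)
            = Finset.univ.filter (fun v : Fin (m+1) → Bool => v j = true) from by
          ext v
          simp only [Finset.mem_filter, Finset.mem_univ, true_and, Bool.not_eq_false]
          constructor
          · exact fun h => h.2
          · intro h
            refine ⟨fun hc => ?_, h⟩
            rw [hc] at h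
            exact Bool.false_ne_true h]
        refine Finset.prod_congr rfl (fun v hv => ?_)
        simp only [Finset.mem_filter] at hv
        rw [vertexPoint_insertNth, hv.2, if_pos rfl]
    simp_rw [hsplitprod]
    rw [integral_const_mul]
    congr 1
    exact integral_add_left_eq_self (fun y => Rside j F y t') x
  -- Step 2 : a.e. bound for PK by the product of sup norms
  have hae : ∀ᵐ t' ∂ν', ‖PK t'‖ ≤ ∏ v ∈ K0, (eLpNorm (F v) ⊤ μ).toReal := by
    have hall : ∀ v ∈ K0, ∀ᵐ t' ∂ν',
        ‖F v (vertexPoint x t' (v ∘ j.succAbove))‖ ≤ (eLpNorm (F v) ⊤ μ).toReal := by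
      intro v hv
      simp only [hK0, Finset.mem_filter] at hv
      have hex : ∃ i, (v ∘ j.succAbove) i = true := by
        obtain ⟨i, hi⟩ : ∃ i, v i = true := by
          by_contra hcon
          push_neg at hcon
          exact hv.2.1 (funext fun i => by simpa using hcon i)
        have hij : i ≠ j := fun h => by
          rw [h, hv.2.2] at hi
          exact Bool.false_ne_true hi
        obtain ⟨kk, hkk⟩ := Fin.exists_succAbove_eq hij
        exact ⟨kk, by simpa [Function.comp, hkk] using hi⟩
      have := ae_norm_comp_le μ (F v) (hmeas v) (hC v) (v ∘ j.succAbove) hex x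
      simpa [vertexPoint_def] using this
    rw [← Filter.eventually_all_finset] at hall
    filter_upwards [hall] with t' h
    simp only [hPK]
    rw [norm_prod]
    refine Finset.prod_le_prod (fun v _ => norm_nonneg _) (fun v hv => ?_)
    rw [norm_cstar]
    exact h v hv
  -- integrability facts
  have hint1 : Integrable (fun t' => PK t' * Rtil μ j F t') ν' := by
    refine integrable_of_bdd ((hPKmeas.mul hRtilmeas.measurable).aestronglyMeasurable)
      (C := C ^ K0.card * C ^ (Finset.univ.filter
        (fun v : Fin (m+1) → Bool => v j = true)).card) (fun t' => ?_)
    rw [norm_mul]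
    exact mul_le_mul (hPKbd t') (hRtilbd t') (norm_nonneg _)
      (le_trans (norm_nonneg _) (hPKbd t'))
  have hintR : Integrable (fun t' => ‖Rtil μ j F t'‖) ν' := by
    refine (integrable_of_bdd hRtilmeas.aestronglyMeasurable
      (C := C ^ (Finset.univ.filter
        (fun v : Fin (m+1) → Bool => v j = true)).card) (fun t' => hRtilbd t')).norm
  -- Step 3 : main estimate chain
  have h2 : ‖cornerConv μ (m+1) F x‖
      ≤ (∏ v ∈ K0, (eLpNorm (F v) ⊤ μ).toReal) * ∫ t', ‖Rtil μ j F t'‖ ∂ν' := by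
    rw [hsplit]
    refine (norm_integral_le_integral_norm _).trans ?_
    have hmono : ∫ t', ‖PK t' * Rtil μ j F t'‖ ∂ν'
        ≤ ∫ t', (∏ v ∈ K0, (eLpNorm (F v) ⊤ μ).toReal) * ‖Rtil μ j F t'‖ ∂ν' := by
      refine integral_mono_ae hint1.norm (hintR.const_mul _) ?_
      filter_upwards [hae] with t' h
      rw [norm_mul]
      exact mul_le_mul_of_nonneg_right h (norm_nonneg _)
    refine hmono.trans (le_of_eq ?_)
    rw [integral_const_mul]
  have hM0 : 0 ≤ ∏ v ∈ K0, (eLpNorm (F v) ⊤ μ).toReal :=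
    Finset.prod_nonneg (fun v _ => ENNReal.toReal_nonneg)
  have h3 : ∫ t', ‖Rtil μ j F t'‖ ∂ν' ≤ (∫ t', ‖Rtil μ j F t'‖^2 ∂ν') ^ ((1:ℝ)/2) :=
    integral_le_rpow_half ν' _ hRtilmeas.norm.aestronglyMeasurable
      (fun t' => norm_nonneg _) (fun t' => hRtilbd t')
  have h4 : ∫ t', ‖Rtil μ j F t'‖^2 ∂ν'
      ≤ (∏ u ∈ K1, gowersNorm μ (m+1) (F u))^2 := by
    have hGP := GP_update_true μ j F hmeas hC
    have hre : ∫ t', ‖Rtil μ j F t'‖^2 ∂ν'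
        = ‖GP μ (m+1) (fun v => F (Function.update v j true))‖ := by
      rw [hGP, Complex.norm_real,
        Real.norm_of_nonneg (integral_nonneg fun _ => sq_nonneg _)]
    rw [hre]
    refine (gowersCS μ _ (fun v => hmeas _) (C := C) (fun v y => hC _ y)).trans
      (le_of_eq ?_)
    rw [← Finset.prod_filter_mul_prod_filter_not Finset.univ
      (fun σ : Fin (m+1) → Bool => σ j = true)]
    have ha : ∏ σ ∈ Finset.univ.filter (fun σ : Fin (m+1) → Bool => σ j = true),
        gowersNorm μ (m+1) (F (Function.update σ j true))
        = ∏ u ∈ K1, gowersNorm μ (m+1) (F u) := by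
      refine Finset.prod_congr rfl (fun σ hσ => ?_)
      simp only [hK1, Finset.mem_filter] at hσ
      rw [update_true_of_true hσ.2]
    have hb2 : ∏ σ ∈ Finset.univ.filter (fun σ : Fin (m+1) → Bool => ¬ σ j = true),
        gowersNorm μ (m+1) (F (Function.update σ j true))
        = ∏ u ∈ K1, gowersNorm μ (m+1) (F u) := by
      rw [show Finset.univ.filter (fun σ : Fin (m+1) → Bool => ¬ σ j = true)
          = Finset.univ.filter (fun σ : Fin (m+1) → Bool => σ j = false) from by
        ext σ; simp]
      rw [prod_filter_update_true j
        (fun w => gowersNorm μ (m+1) (F (Function.update w j true)))]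
      refine Finset.prod_congr rfl (fun u hu => ?_)
      simp only [hK1, Finset.mem_filter] at hu
      rw [Function.update_idem, update_true_of_true hu.2]
    rw [ha, hb2, sq]
  have hgNnn : 0 ≤ ∏ u ∈ K1, gowersNorm μ (m+1) (F u) :=
    Finset.prod_nonneg (fun u _ => gowersNorm_nonneg' μ (F u) (hmeas u) (hC u))
  calc ‖cornerConv μ (m+1) F x‖
      ≤ (∏ v ∈ K0, (eLpNorm (F v) ⊤ μ).toReal) * ∫ t', ‖Rtil μ j F t'‖ ∂ν' := h2
    _ ≤ (∏ v ∈ K0, (eLpNorm (F v) ⊤ μ).toReal)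
        * ((∫ t', ‖Rtil μ j F t'‖^2 ∂ν') ^ ((1:ℝ)/2)) :=
        mul_le_mul_of_nonneg_left h3 hM0
    _ ≤ (∏ v ∈ K0, (eLpNorm (F v) ⊤ μ).toReal)
        * (((∏ u ∈ K1, gowersNorm μ (m+1) (F u))^2) ^ ((1:ℝ)/2)) :=
        mul_le_mul_of_nonneg_left
          (Real.rpow_le_rpow (integral_nonneg fun _ => sq_nonneg _) h4 (by norm_num)) hM0
    _ = _ := by rw [rpow_half_sq hgNnn]
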